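/- Let B ≥ 1 be a natural number, let ε ≥ 0 be a real number, and set p = 1/(1 + e^{ε/2}). For i : Fin B and v : Fin B → Bool, let d(i,v) be the number of coordinates j such that v j differs from the indicator of (j = i), and define P_p(i,v) = p^{d(i,v)}·(1−p)^{B−d(i,v)}. Then for all i, i' : Fin B and all v : Fin B → Bool, P_p(i,v) ≤ e^ε · P_p(i',v). In other words, randomized response on one-hot vectors with flipping probability 1/(e^{ε/2}+1) satisfies ε-local differential privacy. -/

import Mathlib

/-- Hamming distance of an output vector `v` to the one-hot vector of bucket
index `i`. -/
def hamDist {B : ℕ} (i : Fin B) (v : Fin B → Bool) : ℕ :=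
  (Finset.univ.filter (fun j : Fin B => v j ≠ (if j = i then true else false))).card

/-- Output probability of randomized response with flipping probability `p`
applied to the one-hot vector of bucket index `i`. -/
noncomputable def rrProb {B : ℕ} (p : ℝ) (i : Fin B) (v : Fin B → Bool) : ℝ :=
  p ^ hamDist i v * (1 - p) ^ (B - hamDist i v)

lemma hamDist_le {B : ℕ} (i : Fin B) (v : Fin B → Bool) : hamDist i v ≤ B := by
  classical
  unfold hamDist
  simpa using Finset.card_filter_le (Finset.univ : Finset (Fin B))
    (fun j => v j ≠ (if j = i then true else false))

lemma hamDist_close {B : ℕ} (a b : Fin B) (v : Fin B → Bool) :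
    hamDist a v ≤ hamDist b v + 2 := by
  unfold hamDist
  have hsub : (Finset.univ.filter (fun j : Fin B => v j ≠ (if j = a then true else false))) ⊆
      (Finset.univ.filter (fun j : Fin B => v j ≠ (if j = b then true else false))) ∪ {a, b} := by
    intro j hj
    simp only [Finset.mem_filter, Finset.mem_union, Finset.mem_insert,
      Finset.mem_singleton, Finset.mem_univ, true_and] at *
    by_cases hja : j = a
    · tauto
    by_cases hjb : j = b
    · tauto
    · left; simpa [hja, hjb] using hj
  have h1 := Finset.card_le_card hsub
  have h2 := Finset.card_union_le
    (Finset.univ.filter (fun j : Fin B => v j ≠ (if j = b then true else false)))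
    ({a, b} : Finset (Fin B))
  have h3 : ({a, b} : Finset (Fin B)).card ≤ 2 := by
    apply le_trans (Finset.card_insert_le _ _)
    simp
  omega

/-- Randomized response on one-hot bucket vectors with flipping probability
`p = 1/(1 + e^{ε/2})` satisfies ε-local differential privacy:
`P_p(i,v) ≤ e^ε · P_p(i',v)` for all `i, i', v`. -/
theorem stmt10 (B : ℕ) (hB : 1 ≤ B) (ε : ℝ) (hε : 0 ≤ ε) (p : ℝ)
    (hp : p = 1 / (1 + Real.exp (ε / 2))) (i i' : Fin B) (v : Fin B → Bool) :
    rrProb p i v ≤ Real.exp ε * rrProb p i' v := by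
  have hE : (0:ℝ) < Real.exp (ε/2) := Real.exp_pos _
  have hE1 : (1:ℝ) ≤ Real.exp (ε/2) := Real.one_le_exp (by linarith)
  have hden : (0:ℝ) < 1 + Real.exp (ε/2) := by linarith
  have hp0 : 0 < p := by rw [hp]; positivity
  have h1p : 1 - p = Real.exp (ε/2) * p := by
    rw [hp]; field_simp; ring
  have hple : p ≤ 1 - p := by rw [h1p]; nlinarith
  have h1p0 : 0 < 1 - p := lt_of_lt_of_le hp0 hple
  have hexp1 : (1:ℝ) ≤ Real.exp ε := Real.one_le_exp hε
  set d := hamDist i v with hd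
  set d' := hamDist i' v with hd'
  have hdB : d ≤ B := hamDist_le i v
  have hd'B : d' ≤ B := hamDist_le i' v
  unfold rrProb
  rw [← hd, ← hd']
  rcases le_or_gt d' d with h | h
  · -- rrProb i v ≤ rrProb i' v
    have e1 : p ^ d = p ^ d' * p ^ (d - d') := by rw [← pow_add]; congr 1; omega
    have e2 : (1 - p) ^ (d - d') * (1 - p) ^ (B - d) = (1 - p) ^ (B - d') := by
      rw [← pow_add]; congr 1; omega
    have hle : p ^ (d - d') ≤ (1 - p) ^ (d - d') := pow_le_pow_left₀ hp0.le hple _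
    calc p ^ d * (1 - p) ^ (B - d)
        = p ^ d' * p ^ (d - d') * (1 - p) ^ (B - d) := by rw [e1]
      _ ≤ p ^ d' * (1 - p) ^ (d - d') * (1 - p) ^ (B - d) := by
          have := mul_le_mul_of_nonneg_left hle (pow_nonneg hp0.le d')
          have h2 : (0:ℝ) ≤ (1 - p) ^ (B - d) := pow_nonneg h1p0.le _
          nlinarith [pow_nonneg hp0.le d']
      _ = p ^ d' * (1 - p) ^ (B - d') := by rw [← e2]; ring
      _ ≤ Real.exp ε * (p ^ d' * (1 - p) ^ (B - d')) := by
          nlinarith [pow_nonneg hp0.le d', pow_nonneg h1p0.le (B - d'),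
            mul_nonneg (pow_nonneg hp0.le d') (pow_nonneg h1p0.le (B - d'))]
  · -- d < d', k := d' - d ≤ 2
    have hk2 : d' - d ≤ 2 := by have := hamDist_close i' i v; omega
    have e3 : (1 - p) ^ (B - d) = (1 - p) ^ (B - d') * (1 - p) ^ (d' - d) := by
      rw [← pow_add]; congr 1; omega
    have e4 : p ^ d' = p ^ d * p ^ (d' - d) := by rw [← pow_add]; congr 1; omega
    have hkey : (1 - p) ^ (d' - d) ≤ Real.exp ε * p ^ (d' - d) := by
      rw [h1p, mul_pow, ← Real.exp_nat_mul]
      have : Real.exp ((d' - d : ℕ) * (ε / 2)) ≤ Real.exp ε := by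
        apply Real.exp_le_exp.mpr
        have : ((d' - d : ℕ) : ℝ) ≤ 2 := by exact_mod_cast hk2
        nlinarith
      nlinarith [pow_pos hp0 (d' - d)]
    calc p ^ d * (1 - p) ^ (B - d)
        = (p ^ d * (1 - p) ^ (B - d')) * (1 - p) ^ (d' - d) := by
          rw [e3]; ring
      _ ≤ (p ^ d * (1 - p) ^ (B - d')) * (Real.exp ε * p ^ (d' - d)) := by
          apply mul_le_mul_of_nonneg_left hkey
          exact mul_nonneg (pow_nonneg hp0.le _) (pow_nonneg h1p0.le _)
      _ = Real.exp ε * (p ^ d' * (1 - p) ^ (B - d')) := by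
          rw [e4]; ring
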